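/- Let a directed graph on nodes {0,1,...,N} contain a directed spanning tree rooted at node 0, and partition its Laplacian as L̂ = [[0, 0], [L̂₂, L̂₁]] with L̂₁ ∈ ℝ^{N×N}. Then L̂₁ is a nonsingular M-matrix. -/

import Mathlib

open Matrix Finset

/-- If a leader-follower digraph on nodes {0,...,N} contains a directed spanning tree
    rooted at the leader (node 0, which has no incoming edges), then the follower
    block L̂₁ of the Laplacian is a nonsingular M-matrix. -/
theorem follower_block_M_matrix (N : ℕ)
    (a : Matrix (Fin (N + 1)) (Fin (N + 1)) ℝ)
    (hdiag : ∀ i, a i i = 0) (h01 : ∀ i j, a i j = 0 ∨ a i j = 1)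
    (hleader : ∀ j, a 0 j = 0)
    (htree : ∀ i : Fin (N + 1), Relation.ReflTransGen (fun u v => a v u ≠ 0) 0 i) :
    let L : Matrix (Fin (N + 1)) (Fin (N + 1)) ℝ :=
      fun i j => if i = j then ∑ k, a i k else -a i j
    let L1 : Matrix (Fin N) (Fin N) ℝ := fun i j => L i.succ j.succ
    (∀ i j, i ≠ j → L1 i j ≤ 0) ∧
      ∀ μ : ℂ, (∃ v : Fin N → ℂ, v ≠ 0 ∧ (L1.map Complex.ofReal) *ᵥ v = μ • v) →
        0 < μ.re := by
  intro L L1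
  have ha : ∀ i j, 0 ≤ a i j := by
    intro i j; rcases h01 i j with h | h <;> simp [h]
  constructor
  · intro i j hij
    have hne : i.succ ≠ j.succ := by simpa [Fin.succ_inj] using hij
    show (if i.succ = j.succ then ∑ k, a i.succ k else -a i.succ j.succ) ≤ 0
    rw [if_neg hne]
    linarith [ha i.succ j.succ]
  · rintro μ ⟨v, hv0, hv⟩
    by_contra hre
    push_neg at hre
    -- basic data
    set d : Fin N → ℝ := fun i => ∑ k, a i.succ k with hd
    set s : Fin N → ℝ := fun i => ∑ j : Fin N, a i.succ j.succ with hs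
    have hds : ∀ i, d i = a i.succ 0 + s i := fun i => Fin.sum_univ_succ _
    have hd0 : ∀ i, 0 ≤ d i := fun i => Finset.sum_nonneg fun k _ => ha _ _
    have hs0 : ∀ i, 0 ≤ s i := fun i => Finset.sum_nonneg fun k _ => ha _ _
    have hsd : ∀ i, s i ≤ d i := fun i => by have := ha i.succ 0; linarith [hds i]
    -- row equations
    have hrow : ∀ i, ∑ j, ((L1 i j : ℝ) : ℂ) * v j = μ * v i := by
      intro i
      have := congrFun hv i
      simpa [Matrix.mulVec, dotProduct, Matrix.map_apply] using this
    have hstar : ∀ i, (d i : ℂ) * v i - ∑ j, (a i.succ j.succ : ℂ) * v j = μ * v i := by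
      intro i
      have h := hrow i
      have hterm : ∀ j : Fin N, ((L1 i j : ℝ) : ℂ) * v j
          = (if j = i then (d i : ℂ) * v i else 0) - (a i.succ j.succ : ℂ) * v j := by
        intro j
        by_cases hji : j = i
        · subst hji
          have h2 : a j.succ j.succ = 0 := hdiag j.succ
          show ((if j.succ = j.succ then ∑ k, a j.succ k else -a j.succ j.succ : ℝ) : ℂ) * v j = _
          rw [if_pos rfl, if_pos rfl, h2, hd]
          push_cast
          ring
        · have hne : i.succ ≠ j.succ := by
            simpa [Fin.succ_inj] using (fun hh => hji hh.symm : i ≠ j)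
          show ((if i.succ = j.succ then ∑ k, a i.succ k else -a i.succ j.succ : ℝ) : ℂ) * v j = _
          rw [if_neg hne, if_neg hji]
          push_cast
          ring
      rw [Finset.sum_congr rfl (fun j _ => hterm j), Finset.sum_sub_distrib,
        Finset.sum_ite_eq' Finset.univ i (fun _ => (d i : ℂ) * v i)] at h
      simpa using h
    -- a maximizing index
    obtain ⟨j0, hj0⟩ : ∃ j, v j ≠ 0 := by
      by_contra h
      push_neg at h
      exact hv0 (funext fun j => h j)
    obtain ⟨i₀, -, hmax⟩ := Finset.exists_max_image (Finset.univ : Finset (Fin N))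
      (fun j => ‖v j‖) ⟨j0, Finset.mem_univ j0⟩
    set m : ℝ := ‖v i₀‖ with hm
    have hmpos : 0 < m := lt_of_lt_of_le (norm_pos_iff.mpr hj0) (hmax j0 (Finset.mem_univ j0))
    have hvi₀ : v i₀ ≠ 0 := norm_pos_iff.mp hmpos
    -- normalized eigenvector
    set c : ℂ := (m : ℂ) / v i₀ with hc
    set w : Fin N → ℂ := fun j => c * v j with hw
    have hwmax : ∀ j, ‖w j‖ ≤ m := by
      intro j
      have hcn : ‖c‖ = 1 := by
        rw [hc, norm_div, Complex.norm_real, Real.norm_of_nonneg hmpos.le, hm]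
        exact div_self (norm_ne_zero_iff.mpr hvi₀)
      rw [hw]; simp only [norm_mul, hcn, one_mul]
      exact hmax j (Finset.mem_univ j)
    have hwi₀ : w i₀ = (m : ℂ) := by
      rw [hw, hc]; field_simp
    have hstarw : ∀ i, (d i : ℂ) * w i - ∑ j, (a i.succ j.succ : ℂ) * w j = μ * w i := by
      intro i
      simp only [hw]
      have hsum : ∑ j, (a i.succ j.succ : ℂ) * (c * v j)
          = c * ∑ j, (a i.succ j.succ : ℂ) * v j := by
        rw [Finset.mul_sum]
        exact Finset.sum_congr rfl fun j _ => by ring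
      rw [hsum]
      linear_combination c * hstar i
    -- bound on the off-diagonal sum
    have hbound : ∀ i, ‖∑ j, (a i.succ j.succ : ℂ) * w j‖ ≤ s i * m := by
      intro i
      calc ‖∑ j, (a i.succ j.succ : ℂ) * w j‖ ≤ ∑ j, ‖(a i.succ j.succ : ℂ) * w j‖ :=
            norm_sum_le _ _
        _ ≤ ∑ j : Fin N, a i.succ j.succ * m := by
            refine Finset.sum_le_sum fun j _ => ?_
            rw [norm_mul, Complex.norm_real, Real.norm_of_nonneg (ha _ _)]
            exact mul_le_mul_of_nonneg_left (hwmax j) (ha _ _)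
        _ = s i * m := by simp only [hs, Finset.sum_mul]
    -- Step 1 : μ = 0
    have hμ : μ = 0 := by
      have h := hstarw i₀
      have heq : ((d i₀ : ℂ) - μ) * w i₀ = ∑ j, (a i₀.succ j.succ : ℂ) * w j := by
        rw [sub_mul]; rw [sub_eq_iff_eq_add] at h ⊢; linear_combination h
      have hn : ‖(d i₀ : ℂ) - μ‖ * m ≤ s i₀ * m := by
        have := hbound i₀
        rw [← heq, norm_mul, hwi₀, Complex.norm_real, Real.norm_of_nonneg hmpos.le] at this
        exact this
      have hn' : ‖(d i₀ : ℂ) - μ‖ ≤ s i₀ := le_of_mul_le_mul_right hn hmpos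
      have hsq : ‖(d i₀ : ℂ) - μ‖ ^ 2 = (d i₀ - μ.re) ^ 2 + μ.im ^ 2 := by
        rw [Complex.sq_norm, Complex.normSq_apply]
        simp only [Complex.sub_re, Complex.sub_im, Complex.ofReal_re, Complex.ofReal_im]
        ring
      have hineq : (d i₀ - μ.re) ^ 2 + μ.im ^ 2 ≤ s i₀ ^ 2 := by
        rw [← hsq]
        exact pow_le_pow_left₀ (norm_nonneg _) hn' 2
      have h1 : μ.re ^ 2 + μ.im ^ 2 ≤ 0 := by
        nlinarith [hsd i₀, hd0 i₀, hs0 i₀]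
      have h2 : μ.re = 0 := by nlinarith [sq_nonneg μ.re, sq_nonneg μ.im]
      have h3 : μ.im = 0 := by nlinarith [sq_nonneg μ.re, sq_nonneg μ.im]
      exact Complex.ext h2 h3
    subst hμ
    -- Step 2 : propagation
    have hprop : ∀ i : Fin N, w i = (m : ℂ) →
        a i.succ 0 = 0 ∧ ∀ j, a i.succ j.succ ≠ 0 → w j = (m : ℂ) := by
      intro i hwi
      have h := hstarw i
      rw [hwi, zero_mul, sub_eq_zero] at h
      -- h : (d i : ℂ) * m = ∑ j, (a ..) * w j
      have hre : d i * m = ∑ j, a i.succ j.succ * (w j).re := by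
        have := congrArg Complex.re h
        simpa [Complex.re_sum, Complex.mul_re] using this
      have hterm : ∀ j, a i.succ j.succ * (w j).re ≤ a i.succ j.succ * m := by
        intro j
        refine mul_le_mul_of_nonneg_left ?_ (ha _ _)
        exact le_trans (Complex.re_le_norm _) (hwmax j)
      have hsum_le : ∑ j, a i.succ j.succ * (w j).re ≤ s i * m := by
        simp only [hs, Finset.sum_mul]
        exact Finset.sum_le_sum fun j _ => hterm j
      have ha0 : a i.succ 0 = 0 := by
        have : d i * m ≤ s i * m := hre ▸ hsum_le
        have h' : a i.succ 0 * m ≤ 0 := by rw [hds i] at this; nlinarith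
        nlinarith [ha i.succ 0]
      refine ⟨ha0, ?_⟩
      have hdse : d i = s i := by rw [hds i, ha0]; ring
      have hzero : ∑ j, a i.succ j.succ * (m - (w j).re) = 0 := by
        have : ∑ j, a i.succ j.succ * (m - (w j).re)
            = s i * m - ∑ j, a i.succ j.succ * (w j).re := by
          simp only [hs, Finset.sum_mul]
          rw [← Finset.sum_sub_distrib]
          exact Finset.sum_congr rfl fun j _ => by ring
        rw [this, ← hre, hdse]; ring
      have hall := (Finset.sum_eq_zero_iff_of_nonneg fun j _ => by
        have := hterm j
        nlinarith [ha i.succ j.succ]).mp hzero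
      intro j hja
      have hj := hall j (Finset.mem_univ j)
      have hre_j : (w j).re = m := by
        rcases h01 i.succ j.succ with h' | h'
        · exact absurd h' hja
        · rw [h'] at hj; linarith [hj]
      have him_j : (w j).im = 0 := by
        have hn := hwmax j
        have : (w j).re ^ 2 + (w j).im ^ 2 ≤ m ^ 2 := by
          have h2 : ‖w j‖ ^ 2 ≤ m ^ 2 := pow_le_pow_left₀ (norm_nonneg _) hn 2
          rw [Complex.sq_norm, Complex.normSq_apply] at h2
          nlinarith [h2]
        nlinarith [sq_nonneg (w j).im, hre_j]
      exact Complex.ext (by simp [hre_j]) (by simp [him_j])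
    -- Step 3 : walk up a spanning-tree path to the leader
    have key : ∀ u : Fin (N + 1), Relation.ReflTransGen (fun x y => a y x ≠ 0) 0 u →
        ¬ (∃ j : Fin N, u = j.succ ∧ w j = (m : ℂ)) := by
      intro u hu
      induction hu with
      | refl =>
        rintro ⟨j, hj, -⟩
        exact (Fin.succ_ne_zero j) hj.symm
      | @tail b c hb hbc ih =>
        rintro ⟨j, rfl, hwj⟩
        obtain ⟨h0, hstep⟩ := hprop j hwj
        have hbne : b ≠ 0 := fun h => hbc (by rw [h]; exact h0)
        obtain ⟨j', rfl⟩ := Fin.eq_succ_of_ne_zero hbne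
        exact ih ⟨j', rfl, hstep j' hbc⟩
    exact key i₀.succ (htree i₀.succ) ⟨i₀, rfl, hwi₀⟩
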